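/- Fix n ≥ 2 and B ≥ 0. The following two statements are equivalent: (1) for every complex n × 2 matrix A with orthonormal columns there exist indices i ≠ j such that the 2 × 2 submatrix of A formed by rows i and j has smallest singular value at least B; (2) for every family of vectors a₁, …, a_n ∈ ℝ³ with ∑ a_i = 0 and ∑ ‖a_i‖ = 1 there exist indices i ≠ j such that ‖a_i‖ + ‖a_j‖ − ‖a_i + a_j‖ ≥ B². -/

import Mathlib

open Matrix Complex

lemma pilp_sum_apply {n : ℕ} (a : Fin n → EuclideanSpace ℝ (Fin 3)) (k : Fin 3) :
    (∑ i, a i) k = ∑ i, a i k :=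
  (map_sum (EuclideanSpace.proj k (𝕜 := ℝ)) a Finset.univ :)

lemma key_lower (u₁ v₁ u₂ v₂ u v : ℂ) (p s : ℝ) (hs : 0 ≤ s)
    (hp : 2*p = normSq u₁ + normSq v₁ + normSq u₂ + normSq v₂)
    (hd : s^2 = p^2 - normSq (u₁*v₂ - u₂*v₁))
    (hx : normSq u + normSq v = 1) :
    p - s ≤ normSq (u₁*u + v₁*v) + normSq (u₂*u + v₂*v) := by
  set c₁ := u₁*u + v₁*v with hc₁
  set c₂ := u₂*u + v₂*v with hc₂
  set d₁ := u₁*(-(starRingEnd ℂ) v) + v₁*((starRingEnd ℂ) u) with hd₁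
  set d₂ := u₂*(-(starRingEnd ℂ) v) + v₂*((starRingEnd ℂ) u) with hd₂
  have hsum : normSq c₁ + normSq c₂ + (normSq d₁ + normSq d₂)
      = (normSq u₁ + normSq v₁ + normSq u₂ + normSq v₂) * (normSq u + normSq v) := by
    simp only [hc₁, hc₂, hd₁, hd₂, Complex.normSq_apply, Complex.add_re, Complex.add_im,
      Complex.mul_re, Complex.mul_im, Complex.neg_re, Complex.neg_im,
      Complex.conj_re, Complex.conj_im]
    ring
  have hdetc : c₁*d₂ - c₂*d₁ = (u₁*v₂ - u₂*v₁) * (u * (starRingEnd ℂ) u + v * (starRingEnd ℂ) v) := by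
    simp only [hc₁, hc₂, hd₁, hd₂]; ring
  have hdet : normSq (c₁*d₂ - c₂*d₁) = normSq (u₁*v₂ - u₂*v₁) * (normSq u + normSq v)^2 := by
    rw [hdetc, normSq_mul, Complex.mul_conj, Complex.mul_conj, ← Complex.ofReal_add,
      Complex.normSq_ofReal]
    ring
  have hlag : (normSq c₁ + normSq c₂) * (normSq d₁ + normSq d₂)
      = normSq (c₁*d₂ - c₂*d₁) + normSq ((starRingEnd ℂ) c₁ * d₁ + (starRingEnd ℂ) c₂ * d₂) := by
    simp only [Complex.normSq_apply, Complex.add_re, Complex.add_im, Complex.sub_re,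
      Complex.sub_im, Complex.mul_re, Complex.mul_im, Complex.conj_re, Complex.conj_im]
    ring
  have h1 : normSq c₁ + normSq c₂ + (normSq d₁ + normSq d₂) = 2*p := by
    rw [hsum, hx, mul_one, hp]
  have h2 : (normSq c₁ + normSq c₂) * (normSq d₁ + normSq d₂) ≥ p^2 - s^2 := by
    rw [hlag, hdet, hx]
    have := normSq_nonneg ((starRingEnd ℂ) c₁ * d₁ + (starRingEnd ℂ) c₂ * d₂)
    nlinarith [this]
  nlinarith [normSq_nonneg c₁, normSq_nonneg c₂, normSq_nonneg d₁, normSq_nonneg d₂,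
    sq_nonneg (normSq c₁ + normSq c₂ - p)]

lemma key_min (u₁ v₁ u₂ v₂ : ℂ) (p s : ℝ)
    (hp : 2*p = normSq u₁ + normSq v₁ + normSq u₂ + normSq v₂)
    (hd : s^2 = p^2 - normSq (u₁*v₂ - u₂*v₁)) :
    ∃ u v : ℂ, normSq u + normSq v = 1 ∧
      normSq (u₁*u + v₁*v) + normSq (u₂*u + v₂*v) = p - s := by
  set β : ℂ := (starRingEnd ℂ) u₁ * v₁ + (starRingEnd ℂ) u₂ * v₂ with hβ
  set α : ℝ := normSq u₁ + normSq u₂ - (p - s) with hα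
  set γ : ℝ := normSq v₁ + normSq v₂ - (p - s) with hγ
  have hlag : (normSq u₁ + normSq u₂) * (normSq v₁ + normSq v₂)
      = normSq (u₁*v₂ - u₂*v₁) + normSq β := by
    simp only [hβ, Complex.normSq_apply, Complex.add_re, Complex.add_im, Complex.sub_re,
      Complex.sub_im, Complex.mul_re, Complex.mul_im, Complex.conj_re, Complex.conj_im]
    ring
  have hαγ : α * γ = normSq β := by
    rw [hα, hγ]; linear_combination hlag + hd + (p - s) * hp
  have hexp : normSq (u₁*β + v₁*(-(α:ℂ))) + normSq (u₂*β + v₂*(-(α:ℂ)))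
      = (normSq u₁ + normSq u₂) * normSq β + (normSq v₁ + normSq v₂) * α^2
        - 2 * α * normSq β := by
    simp only [hβ, Complex.normSq_apply, Complex.add_re, Complex.add_im, Complex.neg_re,
      Complex.neg_im, Complex.mul_re, Complex.mul_im, Complex.conj_re, Complex.conj_im,
      Complex.ofReal_re, Complex.ofReal_im]
    ring
  have key : normSq (u₁*β + v₁*(-(α:ℂ))) + normSq (u₂*β + v₂*(-(α:ℂ)))
      = (p - s) * (normSq β + α^2) := by
    rw [hexp]
    have h1 : normSq u₁ + normSq u₂ = α + (p - s) := by rw [hα]; ring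
    have h2 : normSq v₁ + normSq v₂ = γ + (p - s) := by rw [hγ]; ring
    rw [h1, h2]; linear_combination α * hαγ
  by_cases ht : normSq β + α^2 = 0
  · have hβ0 : normSq β = 0 := by nlinarith [normSq_nonneg β, sq_nonneg α]
    have hα0 : α = 0 := by nlinarith [normSq_nonneg β, sq_nonneg α]
    refine ⟨1, 0, by simp, ?_⟩
    simp only [mul_one, mul_zero, add_zero]
    have : normSq u₁ + normSq u₂ = p - s := by rw [hα] at hα0; linarith
    linarith
  · have htpos : 0 < normSq β + α^2 :=
      lt_of_le_of_ne (add_nonneg (normSq_nonneg β) (sq_nonneg α)) (Ne.symm ht)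
    set t := Real.sqrt (normSq β + α^2) with htdef
    have htpos' : 0 < t := Real.sqrt_pos.mpr htpos
    have htt : t * t = normSq β + α^2 := Real.mul_self_sqrt htpos.le
    refine ⟨β / t, -(α:ℂ) / t, ?_, ?_⟩
    · rw [normSq_div, normSq_div, Complex.normSq_ofReal, htt]
      have hn : normSq (-(α:ℂ)) = α^2 := by
        rw [normSq_neg, Complex.normSq_ofReal]; ring
      rw [hn, ← add_div, div_eq_one_iff_eq (ne_of_gt htpos)]
    · have e1 : u₁ * (β / t) + v₁ * (-(α:ℂ) / t) = (u₁*β + v₁*(-(α:ℂ))) / t := by ring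
      have e2 : u₂ * (β / t) + v₂ * (-(α:ℂ) / t) = (u₂*β + v₂*(-(α:ℂ))) / t := by ring
      rw [e1, e2, normSq_div, normSq_div, Complex.normSq_ofReal, htt,
        ← add_div, div_eq_iff (ne_of_gt htpos)]
      linear_combination key

lemma euclid_sq (a : EuclideanSpace ℝ (Fin 3)) : ‖a‖^2 = a 0^2 + a 1^2 + a 2^2 := by
  rw [EuclideanSpace.norm_eq, Real.sq_sqrt (by positivity)]
  simp [Fin.sum_univ_three, Real.norm_eq_abs, sq_abs]

lemma hopf_identity (u₁ v₁ u₂ v₂ : ℂ) (a₁ a₂ : EuclideanSpace ℝ (Fin 3))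
    (hw₁ : (starRingEnd ℂ) u₁ * v₁ = (a₁ 0 : ℂ) - (a₁ 1 : ℂ) * I)
    (hw₂ : (starRingEnd ℂ) u₂ * v₂ = (a₂ 0 : ℂ) - (a₂ 1 : ℂ) * I)
    (hu₁ : normSq u₁ = ‖a₁‖ + a₁ 2) (hv₁ : normSq v₁ = ‖a₁‖ - a₁ 2)
    (hu₂ : normSq u₂ = ‖a₂‖ + a₂ 2) (hv₂ : normSq v₂ = ‖a₂‖ - a₂ 2) :
    ‖a₁ + a₂‖^2 = (‖a₁‖ + ‖a₂‖)^2 - normSq (u₁*v₂ - u₂*v₁) := by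
  have hdexp : normSq (u₁*v₂ - u₂*v₁)
      = normSq u₁ * normSq v₂ + normSq u₂ * normSq v₁
        - 2 * (((starRingEnd ℂ) u₁ * v₁).re * ((starRingEnd ℂ) u₂ * v₂).re
          + ((starRingEnd ℂ) u₁ * v₁).im * ((starRingEnd ℂ) u₂ * v₂).im) := by
    simp only [Complex.normSq_apply, Complex.sub_re, Complex.sub_im, Complex.mul_re,
      Complex.mul_im, Complex.conj_re, Complex.conj_im]
    ring
  have h1re : ((starRingEnd ℂ) u₁ * v₁).re = a₁ 0 := by rw [hw₁]; simp
  have h1im : ((starRingEnd ℂ) u₁ * v₁).im = -(a₁ 1) := by rw [hw₁]; simp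
  have h2re : ((starRingEnd ℂ) u₂ * v₂).re = a₂ 0 := by rw [hw₂]; simp
  have h2im : ((starRingEnd ℂ) u₂ * v₂).im = -(a₂ 1) := by rw [hw₂]; simp
  have hr₁ : ‖a₁‖^2 = a₁ 0^2 + a₁ 1^2 + a₁ 2^2 := euclid_sq a₁
  have hr₂ : ‖a₂‖^2 = a₂ 0^2 + a₂ 1^2 + a₂ 2^2 := euclid_sq a₂
  have hsum : ‖a₁ + a₂‖^2 = (a₁ 0 + a₂ 0)^2 + (a₁ 1 + a₂ 1)^2 + (a₁ 2 + a₂ 2)^2 := by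
    rw [euclid_sq]
    simp [PiLp.add_apply]
  rw [hsum, hdexp, h1re, h1im, h2re, h2im, hu₁, hv₁, hu₂, hv₂]
  nlinarith [hr₁, hr₂]

lemma norm_eq_of_sq (a : EuclideanSpace ℝ (Fin 3)) (c : ℝ) (hc : 0 ≤ c)
    (h : ‖a‖^2 = c^2) : ‖a‖ = c := by
  calc ‖a‖ = Real.sqrt (‖a‖^2) := (Real.sqrt_sq (norm_nonneg a)).symm
    _ = Real.sqrt (c^2) := by rw [h]
    _ = c := Real.sqrt_sq hc

lemma hopf_down (u v : ℂ) (a : EuclideanSpace ℝ (Fin 3))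
    (h0 : a 0 = ((starRingEnd ℂ) u * v).re) (h1 : a 1 = -((starRingEnd ℂ) u * v).im)
    (h2 : a 2 = (normSq u - normSq v)/2) :
    ‖a‖ = (normSq u + normSq v)/2 := by
  have hnn : 0 ≤ (normSq u + normSq v)/2 := by
    have := normSq_nonneg u; have := normSq_nonneg v; linarith
  apply norm_eq_of_sq a _ hnn
  rw [euclid_sq, h0, h1, h2]
  have : ((starRingEnd ℂ) u * v).re^2 + ((starRingEnd ℂ) u * v).im^2
      = normSq u * normSq v := by
    simp only [Complex.normSq_apply, Complex.mul_re, Complex.mul_im,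
      Complex.conj_re, Complex.conj_im]
    ring
  nlinarith [this]

lemma hopf_lift (a : EuclideanSpace ℝ (Fin 3)) :
    ∃ u v : ℂ, (starRingEnd ℂ) u * v = (a 0 : ℂ) - (a 1 : ℂ) * I ∧
      normSq u = ‖a‖ + a 2 ∧ normSq v = ‖a‖ - a 2 := by
  have hr : ‖a‖^2 = a 0^2 + a 1^2 + a 2^2 := euclid_sq a
  have hrn : 0 ≤ ‖a‖ := norm_nonneg a
  have hz : |a 2| ≤ ‖a‖ := by
    nlinarith [sq_nonneg (a 0), sq_nonneg (a 1), abs_nonneg (a 2), _root_.sq_abs (a 2)]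
  have h2 : 0 ≤ ‖a‖ + a 2 := by cases abs_le.mp hz; linarith
  have h3 : 0 ≤ ‖a‖ - a 2 := by cases abs_le.mp hz; linarith
  by_cases hc : ‖a‖ + a 2 = 0
  · have hx : a 0 = 0 := by nlinarith [sq_nonneg (a 1)]
    have hy : a 1 = 0 := by nlinarith [sq_nonneg (a 0)]
    refine ⟨0, (Real.sqrt (‖a‖ - a 2) : ℂ), ?_, ?_, ?_⟩
    · simp [hx, hy]
    · simp [hc]
    · rw [Complex.normSq_ofReal, Real.mul_self_sqrt h3]
  · have hcpos : 0 < ‖a‖ + a 2 := lt_of_le_of_ne h2 (Ne.symm hc)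
    set t := Real.sqrt (‖a‖ + a 2) with htdef
    have htpos : 0 < t := Real.sqrt_pos.mpr hcpos
    have htt : t * t = ‖a‖ + a 2 := Real.mul_self_sqrt hcpos.le
    have htne : (t:ℂ) ≠ 0 := by
      simp only [ne_eq, Complex.ofReal_eq_zero]; exact ne_of_gt htpos
    refine ⟨(t:ℂ), ((a 0 : ℂ) - (a 1 : ℂ) * I) / t, ?_, ?_, ?_⟩
    · rw [Complex.conj_ofReal]
      field_simp
    · rw [Complex.normSq_ofReal, htt]
    · rw [normSq_div, Complex.normSq_ofReal, htt]
      have hnum : normSq ((a 0 : ℂ) - (a 1 : ℂ) * I) = a 0^2 + a 1^2 := by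
        simp [Complex.normSq_apply]; ring
      rw [hnum, div_eq_iff (ne_of_gt hcpos)]
      nlinarith [hr]

/-- For `n ≥ 2` and `B ≥ 0`: every complex `n × 2` matrix with orthonormal columns
(`Aᴴ * A = 1`) has a `2 × 2` submatrix (formed by two distinct rows) with smallest
singular value at least `B` (expressed via `σ_min² = min over Hermitian-unit x of ‖Mx‖²`),
if and only if every family of vectors `a₁, …, aₙ ∈ ℝ³` forming a unit-perimeter closed
polygon (`∑ aᵢ = 0`, `∑ ‖aᵢ‖ = 1`) contains two indices `i ≠ j` with
`‖aᵢ‖ + ‖aⱼ‖ − ‖aᵢ + aⱼ‖ ≥ B²`. -/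
theorem complex_submatrix_bound_iff_spatial_polygon_bound (n : ℕ) (hn : 2 ≤ n)
    (B : ℝ) (hB : 0 ≤ B) :
    (∀ A : Matrix (Fin n) (Fin 2) ℂ, Aᴴ * A = 1 →
      ∃ i j : Fin n, i ≠ j ∧
        ∀ u v : ℂ, ‖u‖ ^ 2 + ‖v‖ ^ 2 = 1 →
          B ^ 2 ≤ ‖A i 0 * u + A i 1 * v‖ ^ 2
            + ‖A j 0 * u + A j 1 * v‖ ^ 2) ↔
    (∀ a : Fin n → EuclideanSpace ℝ (Fin 3), (∑ i, a i = 0) → (∑ i, ‖a i‖ = 1) →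
      ∃ i j : Fin n, i ≠ j ∧ B ^ 2 ≤ ‖a i‖ + ‖a j‖ - ‖a i + a j‖) := by
  constructor
  · -- matrix bound → polygon bound
    intro h a hsum hper
    choose u v hw hu hv using fun i => hopf_lift (a i)
    set A : Matrix (Fin n) (Fin 2) ℂ := Matrix.of fun i j => if j = 0 then u i else v i with hAdef
    have hA0 : ∀ i, A i 0 = u i := fun i => rfl
    have hA1 : ∀ i, A i 1 = v i := fun i =>
      show (if (1 : Fin 2) = 0 then u i else v i) = v i by norm_num
    have hs0 : ∑ i, a i 0 = 0 := by rw [← pilp_sum_apply, hsum]; rfl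
    have hs1 : ∑ i, a i 1 = 0 := by rw [← pilp_sum_apply, hsum]; rfl
    have hs2 : ∑ i, a i 2 = 0 := by rw [← pilp_sum_apply, hsum]; rfl
    have S01 : ∑ i, (starRingEnd ℂ) (u i) * v i = 0 := by
      have : ∀ i ∈ Finset.univ, (starRingEnd ℂ) (u i) * v i
          = (a i 0 : ℂ) - (a i 1 : ℂ) * I := fun i _ => hw i
      rw [Finset.sum_congr rfl this, Finset.sum_sub_distrib, ← Finset.sum_mul,
        ← Complex.ofReal_sum, ← Complex.ofReal_sum, hs0, hs1]
      simp
    have S00 : ∑ i, (starRingEnd ℂ) (u i) * u i = 1 := by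
      have : ∀ i ∈ Finset.univ, (starRingEnd ℂ) (u i) * u i
          = ((‖a i‖ + a i 2 : ℝ) : ℂ) := fun i _ => by
        rw [mul_comm, Complex.mul_conj, hu i]
      rw [Finset.sum_congr rfl this, ← Complex.ofReal_sum, Finset.sum_add_distrib,
        hper, hs2]
      norm_num
    have S11 : ∑ i, (starRingEnd ℂ) (v i) * v i = 1 := by
      have : ∀ i ∈ Finset.univ, (starRingEnd ℂ) (v i) * v i
          = ((‖a i‖ - a i 2 : ℝ) : ℂ) := fun i _ => by
        rw [mul_comm, Complex.mul_conj, hv i]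
      rw [Finset.sum_congr rfl this, ← Complex.ofReal_sum, Finset.sum_sub_distrib,
        hper, hs2]
      norm_num
    have S10 : ∑ i, (starRingEnd ℂ) (v i) * u i = 0 := by
      have : ∀ i ∈ Finset.univ, (starRingEnd ℂ) (v i) * u i
          = (starRingEnd ℂ) ((starRingEnd ℂ) (u i) * v i) := fun i _ => by
        simp only [_root_.map_mul, Complex.conj_conj]
        ring
      rw [Finset.sum_congr rfl this, ← map_sum, S01, map_zero]
    have horth : Aᴴ * A = 1 := by
      ext j k
      rw [Matrix.mul_apply]
      simp only [Matrix.conjTranspose_apply, Complex.star_def]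
      fin_cases j <;> fin_cases k <;>
        simp only [Matrix.one_apply, Fin.zero_eta, Fin.mk_one, ne_eq, zero_ne_one,
          one_ne_zero, if_true, if_false, reduceIte] <;>
        simp only [hA0, hA1]
      · exact S00
      · exact S01
      · exact S10
      · exact S11
    obtain ⟨i, j, hij, hall⟩ := h A horth
    refine ⟨i, j, hij, ?_⟩
    have hp : 2*(‖a i‖ + ‖a j‖)
        = normSq (u i) + normSq (v i) + normSq (u j) + normSq (v j) := by
      rw [hu i, hv i, hu j, hv j]; ring
    have hdid := hopf_identity (u i) (v i) (u j) (v j) (a i) (a j)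
      (hw i) (hw j) (hu i) (hv i) (hu j) (hv j)
    obtain ⟨x, y, hxy, hval⟩ := key_min (u i) (v i) (u j) (v j)
      (‖a i‖ + ‖a j‖) (‖a i + a j‖) hp (by linarith)
    have hb := hall x y (by rw [Complex.sq_norm, Complex.sq_norm]; exact hxy)
    rw [hA0, hA0, hA1, hA1, Complex.sq_norm, Complex.sq_norm] at hb
    linarith [hval, hb]
  · -- polygon bound → matrix bound
    intro h A hA
    set a : Fin n → EuclideanSpace ℝ (Fin 3) := fun i =>
      WithLp.toLp 2 ![((starRingEnd ℂ) (A i 0) * A i 1).re, -((starRingEnd ℂ) (A i 0) * A i 1).im,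
        (normSq (A i 0) - normSq (A i 1))/2] with hadef
    have ha0 : ∀ i, a i 0 = ((starRingEnd ℂ) (A i 0) * A i 1).re := fun i => rfl
    have ha1 : ∀ i, a i 1 = -((starRingEnd ℂ) (A i 0) * A i 1).im := fun i => rfl
    have ha2 : ∀ i, a i 2 = (normSq (A i 0) - normSq (A i 1))/2 := fun i => rfl
    have hnorm : ∀ i, ‖a i‖ = (normSq (A i 0) + normSq (A i 1))/2 :=
      fun i => hopf_down _ _ _ (ha0 i) (ha1 i) (ha2 i)
    have e00 : ∑ i, (starRingEnd ℂ) (A i 0) * A i 0 = 1 := by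
      have := congrFun (congrFun hA 0) 0
      simpa [Matrix.mul_apply, Matrix.conjTranspose_apply, Matrix.one_apply,
        Complex.star_def] using this
    have e11 : ∑ i, (starRingEnd ℂ) (A i 1) * A i 1 = 1 := by
      have := congrFun (congrFun hA 1) 1
      simpa [Matrix.mul_apply, Matrix.conjTranspose_apply, Matrix.one_apply,
        Complex.star_def] using this
    have e01 : ∑ i, (starRingEnd ℂ) (A i 0) * A i 1 = 0 := by
      have := congrFun (congrFun hA 0) 1
      simpa [Matrix.mul_apply, Matrix.conjTranspose_apply, Matrix.one_apply,
        Complex.star_def] using this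
    have r00 : ∑ i, normSq (A i 0) = 1 := by
      have : ∀ i ∈ Finset.univ, (starRingEnd ℂ) (A i 0) * A i 0
          = ((normSq (A i 0) : ℝ) : ℂ) := fun i _ => by rw [mul_comm, Complex.mul_conj]
      rw [Finset.sum_congr rfl this, ← Complex.ofReal_sum] at e00
      exact_mod_cast e00
    have r11 : ∑ i, normSq (A i 1) = 1 := by
      have : ∀ i ∈ Finset.univ, (starRingEnd ℂ) (A i 1) * A i 1
          = ((normSq (A i 1) : ℝ) : ℂ) := fun i _ => by rw [mul_comm, Complex.mul_conj]
      rw [Finset.sum_congr rfl this, ← Complex.ofReal_sum] at e11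
      exact_mod_cast e11
    have rre : ∑ i, ((starRingEnd ℂ) (A i 0) * A i 1).re = 0 := by
      have := congrArg Complex.re e01
      rw [Complex.re_sum] at this
      simpa using this
    have rim : ∑ i, ((starRingEnd ℂ) (A i 0) * A i 1).im = 0 := by
      have := congrArg Complex.im e01
      rw [Complex.im_sum] at this
      simpa using this
    have c0 : ∑ i, a i 0 = 0 := by
      simp only [ha0]; exact rre
    have c1 : ∑ i, a i 1 = 0 := by
      simp only [ha1]
      rw [Finset.sum_neg_distrib, rim, neg_zero]
    have c2 : ∑ i, a i 2 = 0 := by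
      simp only [ha2]
      rw [← Finset.sum_div, Finset.sum_sub_distrib, r00, r11]
      norm_num
    have hsum : ∑ i, a i = 0 := by
      ext k
      rw [pilp_sum_apply]
      fin_cases k
      · exact c0
      · exact c1
      · exact c2
    have hper : ∑ i, ‖a i‖ = 1 := by
      have : ∀ i ∈ Finset.univ, ‖a i‖ = (normSq (A i 0) + normSq (A i 1))/2 :=
        fun i _ => hnorm i
      rw [Finset.sum_congr rfl this, ← Finset.sum_div, Finset.sum_add_distrib, r00, r11]
      norm_num
    obtain ⟨i, j, hij, hb⟩ := h a hsum hper
    refine ⟨i, j, hij, ?_⟩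
    intro x y hxy
    have hw' : ∀ k, (starRingEnd ℂ) (A k 0) * A k 1 = (a k 0 : ℂ) - (a k 1 : ℂ) * I := by
      intro k
      rw [ha0, ha1]
      apply Complex.ext <;> simp
    have hu' : ∀ k, normSq (A k 0) = ‖a k‖ + a k 2 := fun k => by
      rw [hnorm k, ha2 k]; ring
    have hv' : ∀ k, normSq (A k 1) = ‖a k‖ - a k 2 := fun k => by
      rw [hnorm k, ha2 k]; ring
    have hdid := hopf_identity (A i 0) (A i 1) (A j 0) (A j 1) (a i) (a j)
      (hw' i) (hw' j) (hu' i) (hv' i) (hu' j) (hv' j)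
    have hp : 2*(‖a i‖ + ‖a j‖)
        = normSq (A i 0) + normSq (A i 1) + normSq (A j 0) + normSq (A j 1) := by
      rw [hu' i, hv' i, hu' j, hv' j]; ring
    have hlow := key_lower (A i 0) (A i 1) (A j 0) (A j 1) x y
      (‖a i‖ + ‖a j‖) (‖a i + a j‖) (norm_nonneg _) hp (by linarith)
      (by rw [← Complex.sq_norm, ← Complex.sq_norm]; exact hxy)
    rw [Complex.sq_norm, Complex.sq_norm]
    linarith [hb, hlow]
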